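/- Let N ≥ 2 be a natural number and let s ∈ ℝ^N be a nonzero vector. Define ω_i = |s_i| / ∑_{j=1}^{N} |s_j|, let N_eff = ⌊(∑_{i=1}^{N} ω_i²)^{-1}⌋, and let s_eff be the sum of the N_eff largest entries of ω. If 2 ≤ N_eff < N, then 1 − s_eff ≤ ((N − N_eff)/N) · (1 − √((N − N_eff − 1)/((N_eff + 1)(N − 1)))). -/

import Mathlib

open Finset

set_option maxHeartbeats 1000000

/-- Crux polynomial inequality. -/
lemma emp_crux (kk pp : ℝ) (hkk : 2 ≤ kk) (hpp : 2 ≤ pp) :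
    (pp - 1) * pp ^ 2 * (kk + 1) ≤ (kk * (pp - 1)) ^ 2 * (kk + pp - 1) := by
  nlinarith [mul_nonneg (sub_nonneg.2 hkk) (sub_nonneg.2 hpp), sq_nonneg (kk - pp),
    mul_nonneg (mul_nonneg (sub_nonneg.2 hkk) (sub_nonneg.2 hpp)) (sub_nonneg.2 hpp),
    mul_nonneg (mul_nonneg (sub_nonneg.2 hkk) (sub_nonneg.2 hkk)) (sub_nonneg.2 hpp),
    mul_nonneg (mul_nonneg (sub_nonneg.2 hpp) (sub_nonneg.2 hpp)) (sub_nonneg.2 hpp)]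

/-- Main contradiction lemma, pure real arithmetic. -/
lemma emp_aux (kk pp T c ρ Q : ℝ) (hkk : 2 ≤ kk) (hpp : 1 ≤ pp) (hpp' : pp = 1 ∨ 2 ≤ pp)
    (hc : 0 ≤ c) (hT : 0 ≤ T) (hkc : kk * c ≤ 1 - T) (hTc : T ≤ pp * c)
    (hQ : 1 < Q * (kk + 1))
    (hfc : Q ≤ (1 - T) ^ 2 + kk * (kk - 1) * c ^ 2 - c * (2 * (1 - T) * (kk - 1) - T))
    (hρ : 0 ≤ ρ) (hρ2 : ρ ^ 2 * ((kk + 1) * (kk + pp - 1)) = pp - 1)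
    (hcon : pp * (1 - ρ) < (kk + pp) * T) : False := by
  have hkk0 : (0:ℝ) < kk := by linarith
  have hpp0 : (0:ℝ) < pp := by linarith
  have hn0 : (0:ℝ) < kk + pp := by linarith
  -- Step 1: ρ * (pp * (kk+1)) ≤ kk * (pp - 1)
  have hρM : ρ * (pp * (kk + 1)) ≤ kk * (pp - 1) := by
    rcases hpp' with h1 | h2
    · have : ρ ^ 2 * ((kk + 1) * (kk + 1 - 1)) = 0 := by rw [h1] at hρ2; linarith [hρ2]
      have hρ0 : ρ = 0 := by
        have hz : ρ ^ 2 = 0 := by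
          have hd : (0:ℝ) < (kk + 1) * (kk + 1 - 1) := by nlinarith
          by_contra hne
          have : 0 < ρ ^ 2 := lt_of_le_of_ne (sq_nonneg ρ) (Ne.symm hne)
          nlinarith
        exact pow_eq_zero_iff (n := 2) (by norm_num) |>.mp hz
      rw [hρ0, h1]; simp
    · have hsq : (ρ * (pp * (kk + 1))) ^ 2 * (kk + pp - 1) = (pp - 1) * pp ^ 2 * (kk + 1) := by
        linear_combination pp ^ 2 * (kk + 1) * hρ2
      have hcrux := emp_crux kk pp hkk h2
      have hn1 : (0:ℝ) < kk + pp - 1 := by linarith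
      have hsq2 : (ρ * (pp * (kk + 1))) ^ 2 ≤ (kk * (pp - 1)) ^ 2 := by
        have := hsq.le.trans hcrux
        exact le_of_mul_le_mul_right this hn1
      have hb : 0 ≤ kk * (pp - 1) := by nlinarith
      nlinarith [hsq2, mul_nonneg hρ (by positivity : (0:ℝ) ≤ pp * (kk + 1))]
  -- Step 2: kk + pp ≤ pp * (1 - ρ) * (kk + 1)
  have hE2pre : kk + pp ≤ pp * (1 - ρ) * (kk + 1) := by nlinarith [hρM]
  -- Step 3: 1 < T * (kk + 1)
  have step3 : 1 < T * (kk + 1) := by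
    have h := mul_lt_mul_of_pos_right hcon (by linarith : (0:ℝ) < kk + 1)
    have : kk + pp < (kk + pp) * (T * (kk + 1)) := by nlinarith
    nlinarith
  have hE2 : (kk + 1) * (1 - T) ≤ kk := by nlinarith
  -- Step 4: (kk+pp) * T ≤ pp
  have hTn : (kk + pp) * T ≤ pp := by
    nlinarith [mul_le_mul_of_nonneg_left hTc hkk0.le, mul_le_mul_of_nonneg_left hkc hpp0.le]
  -- Step 5: (kk+1) * G1 ≤ pp^2
  set G1 : ℝ := pp ^ 2 * (1 - T) ^ 2 + kk * (kk - 1) * T ^ 2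
      - pp * T * (2 * (1 - T) * (kk - 1) - T) with hG1
  have hE1 : (kk + 1) * G1 ≤ pp ^ 2 := by
    have hA' : 0 ≤ (kk + pp) * T - pp * (1 - ρ) := by linarith
    have hB' : 0 ≤ pp * (1 + ρ) - (kk + pp) * T := by nlinarith [mul_nonneg hpp0.le hρ]
    have hid : (kk + pp) * (pp ^ 2 - (kk + 1) * G1)
        = (kk + 1) * (kk + pp - 1) * (((kk + pp) * T - pp * (1 - ρ)) * (pp * (1 + ρ) - (kk + pp) * T))
          + pp ^ 2 * ((pp - 1) - ρ ^ 2 * ((kk + 1) * (kk + pp - 1))) := by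
      rw [hG1]; ring
    have hprod : 0 ≤ (kk + 1) * (kk + pp - 1) * (((kk + pp) * T - pp * (1 - ρ)) * (pp * (1 + ρ) - (kk + pp) * T)) := by
      apply mul_nonneg (by nlinarith) (mul_nonneg hA' hB')
    nlinarith [hid, hprod, hρ2]
  -- Step 6
  set D1 : ℝ := pp * c - T with hD1def
  set D2 : ℝ := (1 - T) - kk * c with hD2def
  set D3 : ℝ := pp * (1 - T) - kk * T with hD3def
  set F : ℝ := (1 - T) ^ 2 + kk * (kk - 1) * c ^ 2 - c * (2 * (1 - T) * (kk - 1) - T) with hFdef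
  have hD1 : 0 ≤ D1 := by rw [hD1def]; linarith
  have hD2 : 0 ≤ D2 := by rw [hD2def]; linarith
  have hD3eq : kk * D1 + pp * D2 = D3 := by rw [hD1def, hD2def, hD3def]; ring
  have hkeyF : kk * pp * D3 * F = kk * D2 * G1 + kk * pp * (1 - T) * D1 - kk * (kk - 1) * (D1 * D2 * D3) := by
    rw [hD1def, hD2def, hD3def, hFdef, hG1]; ring
  rcases lt_or_ge 0 D3 with hD3pos | hD3np
  · -- D3 > 0 case
    have hF1 : 1 < (kk + 1) * F := by nlinarith [mul_le_mul_of_nonneg_left hfc (by linarith : (0:ℝ) ≤ kk + 1)]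
    have t1 : kk * D2 * ((kk + 1) * G1) ≤ kk * D2 * pp ^ 2 :=
      mul_le_mul_of_nonneg_left hE1 (mul_nonneg hkk0.le hD2)
    have t2 : kk * pp * D1 * ((kk + 1) * (1 - T)) ≤ kk * pp * D1 * kk :=
      mul_le_mul_of_nonneg_left hE2 (mul_nonneg (mul_nonneg hkk0.le hpp0.le) hD1)
    have t3 : 0 ≤ (kk + 1) * (kk * (kk - 1) * (D1 * D2 * D3)) := by
      apply mul_nonneg (by linarith)
      apply mul_nonneg (by nlinarith)
      exact mul_nonneg (mul_nonneg hD1 hD2) hD3pos.le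
    have t4 : kk * pp * D3 * 1 < kk * pp * D3 * ((kk + 1) * F) :=
      mul_lt_mul_of_pos_left hF1 (by positivity)
    have hkey3 : (kk + 1) * (kk * pp * D3 * F)
        = (kk + 1) * (kk * D2 * G1) + (kk + 1) * (kk * pp * (1 - T) * D1)
          - (kk + 1) * (kk * (kk - 1) * (D1 * D2 * D3)) := by
      linear_combination (kk + 1) * hkeyF
    have hsum : kk * D2 * pp ^ 2 + kk * pp * D1 * kk = kk * pp * D3 := by
      linear_combination kk * pp * hD3eq
    -- t2 relates kk*pp*D1*((kk+1)*(1-T)); hkey3 has (kk+1)*(kk*pp*(1-T)*D1); same up to ring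
    linarith [t1, t2, t3, t4, hkey3, hsum]
  · -- D3 ≤ 0 case: D1 = D2 = 0
    have hD1z : D1 = 0 := by nlinarith [hD3eq, mul_nonneg hkk0.le hD1, mul_nonneg hpp0.le hD2,
      mul_le_mul_of_nonneg_right hkk hD1]
    have hD2z : D2 = 0 := by nlinarith [hD3eq, mul_nonneg hkk0.le hD1, mul_nonneg hpp0.le hD2,
      mul_le_mul_of_nonneg_right hpp hD2]
    have hceq : (kk + pp) * c = 1 := by
      have e1 : T = pp * c := by rw [hD1def] at hD1z; linarith
      have e2 : 1 - T = kk * c := by rw [hD2def] at hD2z; linarith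
      linarith [e1, e2]
    have hFval : F = (kk + pp) * c ^ 2 := by
      rw [hFdef]
      have e1 : pp * c - T = 0 := hD1z
      have e2 : (1 - T) - kk * c = 0 := hD2z
      linear_combination ((1 - T) + kk * c - 2 * c * (kk - 1)) * e2 - c * e1
    have h12 : (kk + 1) * c ≤ 1 := by nlinarith [mul_nonneg (by linarith : (0:ℝ) ≤ pp - 1) hc]
    have hQF : Q ≤ (kk + pp) * c ^ 2 := hfc.trans_eq hFval
    have h13 : Q * (kk + 1) ≤ ((kk + pp) * c ^ 2) * (kk + 1) :=
      mul_le_mul_of_nonneg_right hQF (by linarith)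
    have h15 : ((kk + pp) * c ^ 2) * (kk + 1) = (kk + 1) * c := by
      linear_combination (kk + 1) * c * hceq
    linarith [hQ, h13, h15, h12]


/-- For a nonzero score vector `s ∈ ℝ^N` with normalized weights
`ω_i = |s_i| / ∑_j |s_j|`, effective number `N_eff = ⌊(∑ ω_i²)⁻¹⌋` and effective
mass `s_eff` (sum of the `N_eff` largest entries of `ω`, obtained through a
sorting permutation `σ`), if `2 ≤ N_eff < N` then
`1 - s_eff ≤ ((N - N_eff)/N) * (1 - √((N - N_eff - 1)/((N_eff + 1)(N - 1))))`. -/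
theorem emp_main_inequality (N : ℕ) (hN : 2 ≤ N) (s : Fin N → ℝ) (hs : s ≠ 0)
    (ω : Fin N → ℝ) (hω : ∀ i, ω i = |s i| / ∑ j, |s j|)
    (Neff : ℕ) (hNeff : Neff = ⌊(∑ i, ω i ^ 2)⁻¹⌋₊)
    (σ : Equiv.Perm (Fin N)) (hσ : ∀ i j : Fin N, i ≤ j → ω (σ j) ≤ ω (σ i))
    (seff : ℝ) (hseff : seff = ∑ i ∈ univ.filter (fun i : Fin N => (i : ℕ) < Neff), ω (σ i))
    (h2 : 2 ≤ Neff) (hlt : Neff < N) :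
    1 - seff ≤ (((N : ℝ) - Neff) / N) *
      (1 - Real.sqrt (((N : ℝ) - Neff - 1) / (((Neff : ℝ) + 1) * ((N : ℝ) - 1)))) := by
  -- positivity of total weight
  have hW : 0 < ∑ j, |s j| := by
    obtain ⟨i, hi⟩ := Function.ne_iff.mp hs
    exact Finset.sum_pos' (fun j _ => abs_nonneg _) ⟨i, mem_univ i, abs_pos.mpr hi⟩
  have hω0 : ∀ i, 0 ≤ ω i := fun i => by rw [hω]; positivity
  have hsum1 : ∑ i, ω i = 1 := by
    calc ∑ i, ω i = ∑ i, |s i| / ∑ j, |s j| := by exact Finset.sum_congr rfl fun i _ => hω i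
    _ = (∑ i, |s i|) / ∑ j, |s j| := by rw [Finset.sum_div]
    _ = 1 := div_self hW.ne'
  set Q : ℝ := ∑ i, ω i ^ 2 with hQdef
  have hQ0 : 0 ≤ Q := Finset.sum_nonneg fun i _ => sq_nonneg _
  have hQinv2 : (2:ℝ) ≤ Q⁻¹ := by
    have h2' : 2 ≤ ⌊Q⁻¹⌋₊ := hNeff ▸ h2
    exact_mod_cast (Nat.le_floor_iff (inv_nonneg.mpr hQ0)).mp h2'
  have hQpos : 0 < Q := by
    by_contra h
    push_neg at h
    have : Q⁻¹ ≤ 0 := inv_nonpos.mpr h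
    linarith
  have hQlt : Q⁻¹ < (Neff : ℝ) + 1 := by
    have h := Nat.lt_floor_add_one Q⁻¹
    rw [← hNeff] at h
    exact_mod_cast h
  have hQ1 : 1 < Q * ((Neff : ℝ) + 1) := by
    have h := mul_lt_mul_of_pos_left hQlt hQpos
    rwa [mul_inv_cancel₀ hQpos.ne'] at h
  -- index sets
  set κ : Fin N := ⟨Neff, hlt⟩ with hκ
  set c : ℝ := ω (σ κ) with hcdef
  set A : Finset (Fin N) := univ.filter (fun i : Fin N => (i : ℕ) < Neff) with hA
  set B : Finset (Fin N) := univ.filter (fun i : Fin N => ¬ (i : ℕ) < Neff) with hB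
  have hAI : A = Finset.Iio κ := by
    ext i; simp [hA, Finset.mem_Iio, Fin.lt_def, hκ]
  have hcardA : A.card = Neff := by rw [hAI, Fin.card_Iio]
  have hcardAB : A.card + B.card = N := by
    rw [hA, hB, Finset.card_filter_add_card_filter_not]
    simp
  have hcardB : B.card = N - Neff := by omega
  set T : ℝ := ∑ i ∈ B, ω (σ i) with hTdef
  have hsplit : seff + T = 1 := by
    rw [hseff, hTdef, hA, hB]
    rw [Finset.sum_filter_add_sum_filter_not]
    rw [Equiv.sum_comp σ ω]
    exact hsum1
  have hQsplit : ∑ i ∈ A, ω (σ i) ^ 2 + ∑ i ∈ B, ω (σ i) ^ 2 = Q := by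
    rw [hA, hB, Finset.sum_filter_add_sum_filter_not]
    exact Equiv.sum_comp σ (fun i => ω i ^ 2)
  -- ordering facts
  have hAc : ∀ i ∈ A, c ≤ ω (σ i) := by
    intro i hi
    rw [hA, Finset.mem_filter] at hi
    exact hσ i κ (by rw [Fin.le_def]; simp [hκ]; omega)
  have hBc : ∀ i ∈ B, ω (σ i) ≤ c := by
    intro i hi
    rw [hB, Finset.mem_filter] at hi
    exact hσ κ i (by rw [Fin.le_def]; simp [hκ]; omega)
  have hc0 : 0 ≤ c := hω0 _
  have hT0 : 0 ≤ T := Finset.sum_nonneg fun i _ => hω0 _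
  have hkc : (Neff : ℝ) * c ≤ seff := by
    rw [hseff]
    calc (Neff : ℝ) * c = ∑ _i ∈ A, c := by rw [Finset.sum_const, hcardA, nsmul_eq_mul]
    _ ≤ ∑ i ∈ A, ω (σ i) := Finset.sum_le_sum hAc
  have hTc : T ≤ ((N - Neff : ℕ) : ℝ) * c := by
    rw [hTdef]
    calc ∑ i ∈ B, ω (σ i) ≤ ∑ _i ∈ B, c := Finset.sum_le_sum hBc
    _ = ((N - Neff : ℕ) : ℝ) * c := by rw [Finset.sum_const, hcardB, nsmul_eq_mul]
  -- top square bound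
  have htop : ∑ i ∈ A, ω (σ i) ^ 2 ≤ (seff - Neff * c) ^ 2 + 2 * c * seff - Neff * c ^ 2 := by
    have h1 : ∑ i ∈ A, (ω (σ i) - c) ^ 2 ≤ (∑ i ∈ A, (ω (σ i) - c)) ^ 2 :=
      Finset.sum_sq_le_sq_sum_of_nonneg (fun i hi => sub_nonneg.mpr (hAc i hi))
    have h2' : ∑ i ∈ A, (ω (σ i) - c) = seff - Neff * c := by
      rw [Finset.sum_sub_distrib, Finset.sum_const, hcardA, nsmul_eq_mul, ← hseff]
    have h3 : ∑ i ∈ A, (ω (σ i) - c) ^ 2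
        = ∑ i ∈ A, ω (σ i) ^ 2 - 2 * c * seff + Neff * c ^ 2 := by
      have e : ∀ i, (ω (σ i) - c) ^ 2 = ω (σ i) ^ 2 - 2 * c * ω (σ i) + c ^ 2 := fun i => by ring
      simp only [e]
      rw [Finset.sum_add_distrib, Finset.sum_sub_distrib, ← Finset.mul_sum,
        Finset.sum_const, hcardA, nsmul_eq_mul, ← hseff]
    rw [h2'] at h1
    linarith [h1, h3]
  -- tail square bound
  have htail : ∑ i ∈ B, ω (σ i) ^ 2 ≤ c * T := by
    rw [hTdef, Finset.mul_sum]
    refine Finset.sum_le_sum fun i hi => ?_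
    nlinarith [hBc i hi, hω0 (σ i)]
  have hfc0 : Q ≤ (seff - Neff * c) ^ 2 + 2 * c * seff - Neff * c ^ 2 + c * T := by
    linarith [htop, htail, hQsplit]
  -- real abbreviations
  set kk : ℝ := (Neff : ℝ) with hkkdef
  set pp : ℝ := ((N - Neff : ℕ) : ℝ) with hppdef
  have hnkp : (N : ℝ) = kk + pp := by
    rw [hkkdef, hppdef, ← Nat.cast_add]
    congr 1
    omega
  have hkk2 : (2:ℝ) ≤ kk := by rw [hkkdef]; exact_mod_cast h2
  have hpp1 : (1:ℝ) ≤ pp := by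
    rw [hppdef]
    have : 1 ≤ N - Neff := by omega
    exact_mod_cast this
  have hpp' : pp = 1 ∨ (2:ℝ) ≤ pp := by
    rcases Nat.lt_or_ge (N - Neff) 2 with h | h
    · left; rw [hppdef]; have : N - Neff = 1 := by omega
      rw [this]; norm_num
    · right; rw [hppdef]; exact_mod_cast h
  have hsu : seff = 1 - T := by linarith
  rw [hsu] at hkc hfc0
  have hkc' : kk * c ≤ 1 - T := hkc
  have hfc : Q ≤ (1 - T) ^ 2 + kk * (kk - 1) * c ^ 2 - c * (2 * (1 - T) * (kk - 1) - T) := by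
    nlinarith [hfc0]
  -- the square root
  set ρ : ℝ := Real.sqrt (((N : ℝ) - kk - 1) / ((kk + 1) * ((N : ℝ) - 1))) with hρdef
  have hρ0 : 0 ≤ ρ := Real.sqrt_nonneg _
  have hrval : ((N : ℝ) - kk - 1) / ((kk + 1) * ((N : ℝ) - 1))
      = (pp - 1) / ((kk + 1) * (kk + pp - 1)) := by
    rw [hnkp]; ring_nf
  have hden : (0:ℝ) < (kk + 1) * (kk + pp - 1) := by nlinarith
  have hr0 : 0 ≤ (pp - 1) / ((kk + 1) * (kk + pp - 1)) := by
    apply div_nonneg (by linarith) hden.le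
  have hρ2 : ρ ^ 2 * ((kk + 1) * (kk + pp - 1)) = pp - 1 := by
    rw [hρdef, hrval, Real.sq_sqrt hr0]
    field_simp
    exact mul_div_cancel_right₀ _ (show (0:ℝ) < kk + pp - 1 by linarith).ne'
  -- conclude
  by_contra hcontra
  push_neg at hcontra
  have hgoal : pp * (1 - ρ) < (kk + pp) * T := by
    have hn0 : (0:ℝ) < kk + pp := by linarith
    have hNk : (N:ℝ) - kk = pp := by rw [hnkp]; ring
    have hT' : (pp / (kk + pp)) * (1 - ρ) < T := by
      calc (pp / (kk + pp)) * (1 - ρ) = (((N:ℝ) - kk) / (N:ℝ)) * (1 - ρ) := by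
            rw [hNk, hnkp]
      _ < 1 - seff := hcontra
      _ = T := by linarith
    calc pp * (1 - ρ) = ((pp / (kk + pp)) * (1 - ρ)) * (kk + pp) := by field_simp
    _ < T * (kk + pp) := mul_lt_mul_of_pos_right hT' hn0
    _ = (kk + pp) * T := by ring
  exact emp_aux kk pp T c ρ Q hkk2 hpp1 hpp' hc0 hT0 hkc' hTc
    hQ1 hfc hρ0 hρ2 hgoal
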